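/- Let Φ be the MPP instance reduced from a 3SAT instance (X, C) with n variables and m clauses (as described in the context). In the graph of Φ, the graph distance from v_{x_i} to v_{x_i}^g equals m+2 for every variable x_i, and the graph distance from v_{c_j} to v_{c_j}^g equals m+2 for every clause c_j. -/

import Mathlib

/-!
Formalization of multi-robot path planning on graphs (MPP).

An MPP instance consists of a connected simple graph `G` on a vertex type `V`,
a finite set of robots (an index type `R`), and injective start/goal
configurations `xI xG : R → V`.  A scheduled path is a map `ℕ → V`.
-/

namespace MPPFormal

variable {V R : Type}

/-- The arrival time of a path `p` with goal `g`: the smallest time `t`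
with `p t = g`. -/
noncomputable def arrivalTime (g : V) (p : ℕ → V) : ℕ := sInf {t | p t = g}

/-- A feasible scheduled path from `s` to `g` in the graph `G`:
it starts at `s`, reaches `g` at some time, stays at `g` forever after the
first time it reaches `g`, and at every time step it either traverses an
edge of `G` or stays put. -/
def FeasiblePath (G : SimpleGraph V) (s g : V) (p : ℕ → V) : Prop :=
  p 0 = s ∧ (∃ t, p t = g) ∧ (∀ t, arrivalTime g p ≤ t → p t = g) ∧
    ∀ t, G.Adj (p t) (p (t + 1)) ∨ p t = p (t + 1)

/-- Two scheduled paths collide if they meet at the same vertex at the same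
time, or if they swap along an edge head-on. -/
def Collide (p q : ℕ → V) : Prop :=
  (∃ t, p t = q t) ∨ ∃ t, p t = q (t + 1) ∧ p (t + 1) = q t ∧ p t ≠ p (t + 1)

/-- The length of a scheduled path: the number of time steps at which it
actually moves. -/
noncomputable def pathLen (p : ℕ → V) : ℕ := Set.ncard {t | p t ≠ p (t + 1)}

/-- A solution to the MPP instance `(G, R, xI, xG)`: a family of pairwise
non-colliding feasible paths, one per robot. -/
def IsSolution (G : SimpleGraph V) (xI xG : R → V) (p : R → ℕ → V) : Prop :=
  (∀ i, FeasiblePath G (xI i) (xG i) (p i)) ∧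
    Pairwise fun i j => ¬ Collide (p i) (p j)

/-- `(G, xI, xG)` together with the robot index type `R` forms an MPP
instance: the graph is connected and the start and goal configurations are
injective. -/
def IsMPPInstance (G : SimpleGraph V) (xI xG : R → V) : Prop :=
  G.Connected ∧ Function.Injective xI ∧ Function.Injective xG

variable [Fintype R]

/-- Total arrival time of a solution. -/
noncomputable def totalTime (xG : R → V) (p : R → ℕ → V) : ℕ :=
  ∑ i, arrivalTime (xG i) (p i)

/-- Makespan (last arrival time) of a solution. -/
noncomputable def makespan (xG : R → V) (p : R → ℕ → V) : ℕ :=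
  Finset.univ.sup fun i => arrivalTime (xG i) (p i)

/-- Total distance traveled in a solution. -/
noncomputable def totalDist (p : R → ℕ → V) : ℕ := ∑ i, pathLen (p i)

/-- Maximum single-robot distance of a solution. -/
noncomputable def maxDist (p : R → ℕ → V) : ℕ :=
  Finset.univ.sup fun i => pathLen (p i)

/-- Minimum total arrival time over all solutions. -/
noncomputable def minTotalTime (G : SimpleGraph V) (xI xG : R → V) : ℕ :=
  sInf {c | ∃ p, IsSolution G xI xG p ∧ totalTime xG p = c}

/-- Minimum makespan over all solutions. -/
noncomputable def minMakespan (G : SimpleGraph V) (xI xG : R → V) : ℕ :=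
  sInf {c | ∃ p, IsSolution G xI xG p ∧ makespan xG p = c}

/-- Minimum total distance over all solutions. -/
noncomputable def minTotalDist (G : SimpleGraph V) (xI xG : R → V) : ℕ :=
  sInf {c | ∃ p, IsSolution G xI xG p ∧ totalDist p = c}

/-- Minimum maximum distance over all solutions. -/
noncomputable def minMaxDist (G : SimpleGraph V) (xI xG : R → V) : ℕ :=
  sInf {c | ∃ p, IsSolution G xI xG p ∧ maxDist p = c}

end MPPFormal

/-!
The reduction from 3SAT to MPP.

A 3SAT instance over `n` variables with `m` clauses assigns to each clause
`j : Fin m` three literals; a literal is a pair `(i, b) : Fin n × Bool`,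
`b = true` meaning the non-negated variable `x_i` and `b = false` the
negated literal `¬ x_i`.  The three literals of each clause involve three
distinct variables.
-/

namespace MPPFormal

/-- A 3SAT instance with variables `x_1, …, x_n` and clauses `c_1, …, c_m`. -/
structure ThreeSat (n m : ℕ) where
  lit : Fin m → Fin 3 → Fin n × Bool
  distinctVars : ∀ j (k k' : Fin 3), k ≠ k' → (lit j k).1 ≠ (lit j k').1

/-- An assignment `a` satisfies the instance if every clause contains a true
literal. -/
def ThreeSat.SatisfiedBy {n m : ℕ} (sat : ThreeSat n m) (a : Fin n → Bool) : Prop :=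
  ∀ j, ∃ k, a (sat.lit j k).1 = (sat.lit j k).2

/-- Satisfiability of a 3SAT instance. -/
def ThreeSat.Satisfiable {n m : ℕ} (sat : ThreeSat n m) : Prop :=
  ∃ a, sat.SatisfiedBy a

/-- Vertices of the MPP instance `Φ` reduced from a 3SAT instance with `n`
variables and `m` clauses:
* `vx i` is the left endpoint `v_{x_i}` of the `i`-th variable strip (start of
  the variable robot `r_{x_i}`);
* `vxg i` is the right endpoint `v_{x_i}^g` (goal of `r_{x_i}`);
* `mid i side k` is the interior vertex of the `i`-th upper (`side = true`)
  or lower (`side = false`) path lying at distance `k + 1` from `vx i`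
  (each of the two paths has length `m + 2`, hence `m + 1` interior
  vertices, `k : Fin (m+1)`);
* `vc j` is the start vertex `v_{c_j}` of the clause robot `r_{c_j}`;
* `vcg j` is its goal vertex `v_{c_j}^g`. -/
inductive PhiV (n m : ℕ) where
  | vx (i : Fin n)
  | vxg (i : Fin n)
  | mid (i : Fin n) (side : Bool) (k : Fin (m + 1))
  | vc (j : Fin m)
  | vcg (j : Fin m)
deriving DecidableEq

/-- Base relation generating the edges of `Φ`:
the two length-`(m+2)` paths of each variable strip; an edge from `v_{c_j}`
to the vertex at distance `j + 1` (`1`-indexed: distance `j`) from `v_{x_i}`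
on the upper (resp. lower) path of `x_i` for each non-negated (resp. negated)
literal of `c_j`; the path `v_{c_1}^g - ⋯ - v_{c_m}^g`; and edges from
`v_{c_m}^g` to every `v_{x_i}`. -/
def phiRel {n m : ℕ} (sat : ThreeSat n m) : PhiV n m → PhiV n m → Prop
  | PhiV.vx i, PhiV.mid i' _ k => i = i' ∧ (k : ℕ) = 0
  | PhiV.mid i s k, PhiV.mid i' s' k' => i = i' ∧ s = s' ∧ (k' : ℕ) = (k : ℕ) + 1
  | PhiV.mid i _ k, PhiV.vxg i' => i = i' ∧ (k : ℕ) = m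
  | PhiV.vc j, PhiV.mid i s k => (∃ l, sat.lit j l = (i, s)) ∧ (k : ℕ) = (j : ℕ)
  | PhiV.vcg j, PhiV.vcg j' => (j' : ℕ) = (j : ℕ) + 1
  | PhiV.vcg j, PhiV.vx _ => (j : ℕ) + 1 = m
  | _, _ => False

/-- The graph of the reduced MPP instance `Φ`. -/
def phiGraph {n m : ℕ} (sat : ThreeSat n m) : SimpleGraph (PhiV n m) :=
  SimpleGraph.fromRel (phiRel sat)

/-- Start configuration of `Φ`: the variable robot `r_{x_i}` (index
`Sum.inl i`) starts at `v_{x_i}`; the clause robot `r_{c_j}` (index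
`Sum.inr j`) starts at `v_{c_j}`. -/
def phiStart {n m : ℕ} : Fin n ⊕ Fin m → PhiV n m :=
  Sum.elim PhiV.vx PhiV.vc

/-- Goal configuration of `Φ`: `r_{x_i}` must reach `v_{x_i}^g` and `r_{c_j}`
must reach `v_{c_j}^g`. -/
def phiGoal {n m : ℕ} : Fin n ⊕ Fin m → PhiV n m :=
  Sum.elim PhiV.vxg PhiV.vcg

end MPPFormal

namespace MPPFormal

section Aux

variable {n m : ℕ} (sat : ThreeSat n m)

/-- Potential for the variable-robot distance lower bound. -/
def pot1 : PhiV n m → ℕ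
  | PhiV.vx _ => 0
  | PhiV.mid _ _ k => (k : ℕ) + 1
  | PhiV.vxg _ => m + 2
  | PhiV.vc j => (j : ℕ) + 2
  | PhiV.vcg _ => 0

/-- Potential for the clause-robot distance lower bound. -/
def pot2 (jv : ℕ) : PhiV n m → ℕ
  | PhiV.vx _ => m - jv
  | PhiV.mid _ _ k => m - jv + 1 + (k : ℕ)
  | PhiV.vxg _ => m - jv + 2 + m
  | PhiV.vc j' => m - jv + 2 + (j' : ℕ)
  | PhiV.vcg j' => ((j' : ℕ) - jv) + (jv - (j' : ℕ))

lemma pot1_lip : ∀ u v : PhiV n m, (phiGraph sat).Adj u v → pot1 v ≤ pot1 u + 1 := by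
  intro u v h
  rw [phiGraph, SimpleGraph.fromRel_adj] at h
  obtain ⟨hne, h | h⟩ := h <;>
    cases u <;> cases v <;> simp only [phiRel] at h <;>
    first
    | exact h.elim
    | (simp only [pot1]; omega)

lemma pot2_lip (jv : ℕ) (hjv : jv < m) :
    ∀ u v : PhiV n m, (phiGraph sat).Adj u v → pot2 jv v ≤ pot2 jv u + 1 := by
  intro u v h
  rw [phiGraph, SimpleGraph.fromRel_adj] at h
  obtain ⟨hne, h | h⟩ := h <;>
    cases u <;> cases v <;> simp only [phiRel] at h <;>
    first
    | exact h.elim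
    | (simp only [pot2]; omega)

lemma pot_walk {f : PhiV n m → ℕ}
    (hf : ∀ u v : PhiV n m, (phiGraph sat).Adj u v → f v ≤ f u + 1)
    {u v : PhiV n m} (p : (phiGraph sat).Walk u v) : f v ≤ f u + p.length := by
  induction p with
  | nil => simp
  | cons h p ih =>
    have := hf _ _ h
    simp only [SimpleGraph.Walk.length_cons]
    omega

lemma adj_vx_mid (i : Fin n) (s : Bool) (k : Fin (m + 1)) (hk : (k : ℕ) = 0) :
    (phiGraph sat).Adj (PhiV.vx i) (PhiV.mid i s k) := by
  rw [phiGraph, SimpleGraph.fromRel_adj]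
  exact ⟨by simp, Or.inl ⟨rfl, hk⟩⟩

lemma adj_mid_mid (i : Fin n) (s : Bool) (k k' : Fin (m + 1)) (h : (k' : ℕ) = (k : ℕ) + 1) :
    (phiGraph sat).Adj (PhiV.mid i s k) (PhiV.mid i s k') := by
  rw [phiGraph, SimpleGraph.fromRel_adj]
  refine ⟨?_, Or.inl ⟨rfl, rfl, h⟩⟩
  intro hc
  simp only [PhiV.mid.injEq] at hc
  obtain ⟨-, -, hkk⟩ := hc
  subst hkk
  omega

lemma adj_mid_vxg (i : Fin n) (s : Bool) (k : Fin (m + 1)) (hk : (k : ℕ) = m) :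
    (phiGraph sat).Adj (PhiV.mid i s k) (PhiV.vxg i) := by
  rw [phiGraph, SimpleGraph.fromRel_adj]
  exact ⟨by simp, Or.inl ⟨rfl, hk⟩⟩

lemma adj_vc_mid (j : Fin m) (i : Fin n) (s : Bool) (k : Fin (m + 1))
    (hl : ∃ l, sat.lit j l = (i, s)) (hk : (k : ℕ) = (j : ℕ)) :
    (phiGraph sat).Adj (PhiV.vc j) (PhiV.mid i s k) := by
  rw [phiGraph, SimpleGraph.fromRel_adj]
  exact ⟨by simp, Or.inl ⟨hl, hk⟩⟩

lemma adj_vcg_vcg (j j' : Fin m) (h : (j' : ℕ) = (j : ℕ) + 1) :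
    (phiGraph sat).Adj (PhiV.vcg j) (PhiV.vcg j') := by
  rw [phiGraph, SimpleGraph.fromRel_adj]
  refine ⟨?_, Or.inl h⟩
  intro hc
  simp only [PhiV.vcg.injEq] at hc
  subst hc
  omega

lemma adj_vcg_vx (j : Fin m) (i : Fin n) (h : (j : ℕ) + 1 = m) :
    (phiGraph sat).Adj (PhiV.vcg j) (PhiV.vx i) := by
  rw [phiGraph, SimpleGraph.fromRel_adj]
  exact ⟨by simp, Or.inl h⟩

/-- Ascending walk `mid i s k → vxg i` of length `m - k + 1`. -/
lemma walk_up (i : Fin n) (s : Bool) :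
    ∀ d k (hk : k + d = m),
      ∃ p : (phiGraph sat).Walk (PhiV.mid i s ⟨k, by omega⟩) (PhiV.vxg i), p.length = d + 1 := by
  intro d
  induction d with
  | zero =>
    intro k hk
    exact ⟨(adj_mid_vxg sat i s ⟨k, by omega⟩ (by simpa using hk)).toWalk, by simp⟩
  | succ d ih =>
    intro k hk
    obtain ⟨p, hp⟩ := ih (k + 1) (by omega)
    refine ⟨SimpleGraph.Walk.cons
      (adj_mid_mid sat i s ⟨k, by omega⟩ ⟨k + 1, by omega⟩ rfl) p, ?_⟩
    simp [hp]

/-- Descending walk `mid i s k → vx i` of length `k + 1`. -/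
lemma walk_down (i : Fin n) (s : Bool) :
    ∀ k (hk : k ≤ m),
      ∃ p : (phiGraph sat).Walk (PhiV.mid i s ⟨k, by omega⟩) (PhiV.vx i), p.length = k + 1 := by
  intro k
  induction k with
  | zero =>
    intro hk
    exact ⟨(adj_vx_mid sat i s ⟨0, by omega⟩ rfl).symm.toWalk, rfl⟩
  | succ k ih =>
    intro hk
    obtain ⟨p, hp⟩ := ih (by omega)
    refine ⟨SimpleGraph.Walk.cons
      (adj_mid_mid sat i s ⟨k, by omega⟩ ⟨k + 1, by omega⟩ rfl).symm p, ?_⟩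
    simp [hp]

/-- Walk along the clause-goal path `vcg j → vcg (m-1)` of length `m - 1 - j`. -/
lemma walk_vcg (hm : 0 < m) :
    ∀ d (j : Fin m) (_hd : (j : ℕ) + d = m - 1),
      ∃ p : (phiGraph sat).Walk (PhiV.vcg j) (PhiV.vcg ⟨m - 1, by omega⟩), p.length = d := by
  intro d
  induction d with
  | zero =>
    intro j hd
    have hj : j = ⟨m - 1, by omega⟩ := Fin.ext (show (j : ℕ) = m - 1 by omega)
    exact ⟨SimpleGraph.Walk.nil.copy rfl (by rw [hj]), by simp⟩
  | succ d ih =>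
    intro j hd
    have hj1 : (j : ℕ) + 1 < m := by omega
    obtain ⟨p, hp⟩ := ih ⟨(j : ℕ) + 1, hj1⟩ (show (j : ℕ) + 1 + d = m - 1 by omega)
    refine ⟨SimpleGraph.Walk.cons (adj_vcg_vcg sat j ⟨(j : ℕ) + 1, hj1⟩ rfl) p, ?_⟩
    simp [hp]

end Aux

/-- In the graph of the MPP instance `Φ` reduced from a 3SAT instance with
`n` variables and `m` clauses, the graph distance from `v_{x_i}` to
`v_{x_i}^g` equals `m + 2` for every variable `x_i`, and the graph distance
from `v_{c_j}` to `v_{c_j}^g` equals `m + 2` for every clause `c_j`. -/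
theorem phi_distances {n m : ℕ} (hm : 0 < m) (sat : ThreeSat n m) :
    (∀ i : Fin n, (phiGraph sat).dist (PhiV.vx i) (PhiV.vxg i) = m + 2) ∧
    ∀ j : Fin m, (phiGraph sat).dist (PhiV.vc j) (PhiV.vcg j) = m + 2 := by
  constructor
  · intro i
    -- upper bound walk: vx → mid 0 → ... → mid m → vxg
    obtain ⟨p, hp⟩ := walk_up sat i true m 0 (by omega)
    have pw : ∃ q : (phiGraph sat).Walk (PhiV.vx i) (PhiV.vxg i), q.length = m + 2 :=
      ⟨SimpleGraph.Walk.cons (adj_vx_mid sat i true ⟨0, by omega⟩ rfl) p, by rw [SimpleGraph.Walk.length_cons, hp]⟩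
    obtain ⟨q, hq⟩ := pw
    have hub : (phiGraph sat).dist (PhiV.vx i) (PhiV.vxg i) ≤ m + 2 :=
      hq ▸ SimpleGraph.dist_le q
    have hreach : (phiGraph sat).Reachable (PhiV.vx i) (PhiV.vxg i) := ⟨q⟩
    obtain ⟨w, hw⟩ := hreach.exists_walk_length_eq_dist
    have := pot_walk sat (pot1_lip sat) w
    simp only [pot1] at this
    omega
  · intro j
    set i : Fin n := (sat.lit j 0).1 with hi
    set s : Bool := (sat.lit j 0).2 with hs
    have hlit : ∃ l, sat.lit j l = (i, s) := ⟨0, rfl⟩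
    have hjm : (j : ℕ) < m := j.isLt
    obtain ⟨p1, hp1⟩ := walk_down sat i s (j : ℕ) (by omega)
    obtain ⟨p2, hp2⟩ := walk_vcg sat hm (m - 1 - (j : ℕ)) j (by omega)
    have e1 : (phiGraph sat).Adj (PhiV.vc j) (PhiV.mid i s ⟨(j : ℕ), by omega⟩) :=
      adj_vc_mid sat j i s _ hlit rfl
    have e2 : (phiGraph sat).Adj (PhiV.vx i) (PhiV.vcg (⟨m - 1, by omega⟩ : Fin m)) :=
      (adj_vcg_vx sat ⟨m - 1, by omega⟩ i (by simp; omega)).symm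
    have pw : ∃ q : (phiGraph sat).Walk (PhiV.vc j) (PhiV.vcg j), q.length = m + 2 := by
      refine ⟨SimpleGraph.Walk.cons e1
        (p1.append (SimpleGraph.Walk.cons e2 p2.reverse)), ?_⟩
      simp [hp1, hp2]
      omega
    obtain ⟨q, hq⟩ := pw
    have hub : (phiGraph sat).dist (PhiV.vc j) (PhiV.vcg j) ≤ m + 2 :=
      hq ▸ SimpleGraph.dist_le q
    have hreach : (phiGraph sat).Reachable (PhiV.vc j) (PhiV.vcg j) := ⟨q⟩
    obtain ⟨w, hw⟩ := hreach.exists_walk_length_eq_dist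
    have := pot_walk sat (pot2_lip sat (j : ℕ) hjm) w.reverse
    simp only [pot2, SimpleGraph.Walk.length_reverse] at this
    omega


end MPPFormal
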